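/- arXiv:2212.08564 — 3 statements merged into one kernel-verified Lean document; each statement's English description precedes it below -/
import Mathlib

section
/- Let a, b ∈ ℝ with a ≠ 0 and let t > 0. Then the improper integral lim_{T→∞} ∫_t^T e^{iaτ} e^{-ib·ln τ} dτ/τ exists in ℂ, and its modulus is at most (2 + |b|)/(|a| t). -/
open Filter
open Complex MeasureTheory Set

/-- For `a b : ℝ` with `a ≠ 0` and `t > 0`, the improper integral
`lim_{T→∞} ∫_t^T e^{iaτ} e^{-ib ln τ} dτ/τ` exists in `ℂ` and its modulus is at most
`(2 + |b|) / (|a| t)`. -/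
theorem oscillatory_integral_exists_and_bound (a b t : ℝ) (ha : a ≠ 0) (ht : 0 < t) :
    ∃ L : ℂ,
      Tendsto
        (fun T : ℝ => ∫ τ in t..T,
          Complex.exp (Complex.I * a * τ) * Complex.exp (-(Complex.I * b * Real.log τ)) / τ)
        atTop (nhds L)
      ∧ ‖L‖ ≤ (2 + |b|) / (|a| * t) := by
  have haC : (a:ℂ) ≠ 0 := by exact_mod_cast ha
  have hIa : (Complex.I * a) ≠ 0 := mul_ne_zero Complex.I_ne_zero haC
  set f : ℝ → ℂ := fun τ =>
    Complex.exp (Complex.I * a * τ) * Complex.exp (-(Complex.I * b * Real.log τ)) / τ with hf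
  set v : ℝ → ℂ := fun τ => Complex.exp (Complex.I * a * τ) / (Complex.I * a) with hv
  set u : ℝ → ℂ := fun τ => Complex.exp (-(Complex.I * b * Real.log τ)) / τ with hu
  set w : ℝ → ℂ := fun τ =>
    Complex.exp (Complex.I * a * τ) * Complex.exp (-(Complex.I * b * Real.log τ))
      * (-(1 + Complex.I * b)) / (Complex.I * a * τ ^ 2) with hw
  -- derivative of H = v * u
  have hderiv : ∀ x : ℝ, 0 < x → HasDerivAt (fun τ => v τ * u τ) (f x + w x) x := by
    intro x hx
    have hxC : (x : ℂ) ≠ 0 := by exact_mod_cast hx.ne'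
    have hv' : HasDerivAt v (Complex.exp (Complex.I * a * x)) x := by
      have h1 : HasDerivAt (fun z : ℂ => Complex.exp (Complex.I * a * z))
          (Complex.I * a * Complex.exp (Complex.I * a * x)) (x : ℂ) := by
        simpa [mul_comm, Function.comp_def] using ((Complex.hasDerivAt_exp _).comp (x:ℂ)
          ((hasDerivAt_id (x:ℂ)).const_mul (Complex.I * a)))
      have := (h1.comp_ofReal).div_const (Complex.I * a)
      exact this.congr_deriv (mul_div_cancel_left₀ _ hIa)
    have hu' : HasDerivAt u
        ((Complex.exp (-(Complex.I * b * Real.log x)) * (-(Complex.I * b) * (x:ℂ)⁻¹) * x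
          - Complex.exp (-(Complex.I * b * Real.log x)) * 1) / (x:ℂ)^2) x := by
      have hlog : HasDerivAt (fun τ : ℝ => ((Real.log τ : ℝ) : ℂ)) ((x⁻¹ : ℝ) : ℂ) x :=
        (Real.hasDerivAt_log hx.ne').ofReal_comp
      have h2 : HasDerivAt (fun τ : ℝ => Complex.exp (-(Complex.I * b * Real.log τ)))
          (Complex.exp (-(Complex.I * b * Real.log x)) * (-(Complex.I * b) * (x:ℂ)⁻¹)) x := by
        have := ((hlog.const_mul (Complex.I * (b:ℂ))).neg).cexp
        simpa [mul_comm, mul_assoc, mul_left_comm] using this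
      have h3 : HasDerivAt (fun τ : ℝ => ((τ:ℝ) : ℂ)) 1 x := Complex.ofRealCLM.hasDerivAt
      exact h2.div h3 hxC
    have := hv'.mul hu'
    refine this.congr_deriv (Eq.symm ?_)
    simp only [hf, hu, hv, hw]
    field_simp
    ring_nf
  -- continuity facts on Ici t
  have hsub : Ici t ⊆ {(0:ℝ)}ᶜ := fun x hx => (ht.trans_le hx).ne'
  have hlogC : ContinuousOn (fun τ : ℝ => ((Real.log τ : ℝ) : ℂ)) (Ici t) :=
    Complex.continuous_ofReal.comp_continuousOn (Real.continuousOn_log.mono hsub)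
  have hexp1 : Continuous (fun τ : ℝ => Complex.exp (Complex.I * a * τ)) :=
    Complex.continuous_exp.comp (continuous_const.mul Complex.continuous_ofReal)
  have hexp2 : ContinuousOn (fun τ : ℝ => Complex.exp (-(Complex.I * b * Real.log τ)))
      (Ici t) :=
    Complex.continuous_exp.comp_continuousOn ((continuousOn_const.mul hlogC).neg)
  have hcf : ContinuousOn f (Ici t) :=
    (hexp1.continuousOn.mul hexp2).div Complex.continuous_ofReal.continuousOn
      (fun x hx => by exact_mod_cast (ht.trans_le hx).ne')
  have hcw : ContinuousOn w (Ici t) :=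
    ((hexp1.continuousOn.mul hexp2).mul continuousOn_const).div
      (continuousOn_const.mul ((Complex.continuous_ofReal.continuousOn).pow 2))
      (fun x hx => by
        have : (x:ℂ) ≠ 0 := by exact_mod_cast (ht.trans_le hx).ne'
        exact mul_ne_zero hIa (pow_ne_zero 2 this))
  -- pointwise bound for w
  have hwbound : ∀ x ∈ Ioi t, ‖w x‖ ≤ (1 + |b|) / |a| * x ^ (-2 : ℝ) := by
    intro x hx
    have hxpos : 0 < x := ht.trans hx
    have h1 : ‖Complex.exp (Complex.I * a * x)‖ = 1 := by
      simp [Complex.norm_exp]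
    have h2 : ‖Complex.exp (-(Complex.I * b * Real.log x))‖ = 1 := by
      simp [Complex.norm_exp]
    have h3 : ‖(1 + Complex.I * b : ℂ)‖ ≤ 1 + |b| := by
      refine (norm_add_le _ _).trans ?_
      simp
    have h4 : ‖(Complex.I * a * (x:ℂ) ^ 2 : ℂ)‖ = |a| * x ^ 2 := by
      simp [sq_abs]
    rw [hw]
    simp only
    rw [norm_div, norm_mul, norm_mul, h1, h2, norm_neg, h4, one_mul, one_mul]
    rw [Real.rpow_neg hxpos.le,
      show ((2:ℝ) = ((2:ℕ):ℝ)) by norm_num, Real.rpow_natCast,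
      ← div_eq_mul_inv, div_div]
    gcongr
  -- integrability of w on Ioi t
  have hgint : IntegrableOn (fun x : ℝ => (1 + |b|) / |a| * x ^ (-2 : ℝ)) (Ioi t) :=
    (integrableOn_Ioi_rpow_of_lt (show (-2:ℝ) < -1 by norm_num) ht).const_mul _
  have hwint : IntegrableOn w (Ioi t) := by
    refine Integrable.mono' hgint
      ((hcw.mono (Ioi_subset_Ici le_rfl)).aestronglyMeasurable measurableSet_Ioi) ?_
    exact (ae_restrict_iff' measurableSet_Ioi).2 (ae_of_all _ hwbound)
  -- main identity for T ≥ t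
  have key : ∀ T : ℝ, t ≤ T →
      (∫ τ in t..T, f τ) = (v T * u T - v t * u t) - ∫ τ in t..T, w τ := by
    intro T hT
    have huIcc : uIcc t T = Icc t T := uIcc_of_le hT
    have hposIcc : ∀ x ∈ uIcc t T, 0 < x := by
      intro x hx; rw [huIcc] at hx; exact lt_of_lt_of_le ht hx.1
    have hfint : IntervalIntegrable f volume t T :=
      (hcf.mono (by rw [huIcc]; exact fun x hx => hx.1)).intervalIntegrable
    have hwintT : IntervalIntegrable w volume t T :=
      (hcw.mono (by rw [huIcc]; exact fun x hx => hx.1)).intervalIntegrable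
    have hFTC : (∫ τ in t..T, (f τ + w τ)) = v T * u T - v t * u t :=
      intervalIntegral.integral_eq_sub_of_hasDerivAt
        (fun x hx => hderiv x (hposIcc x hx)) (hfint.add hwintT)
    rw [intervalIntegral.integral_add hfint hwintT] at hFTC
    linear_combination hFTC
  -- limit of the boundary term
  have hHT : Tendsto (fun T : ℝ => v T * u T) atTop (nhds (0:ℂ)) := by
    have hg : Tendsto (fun T : ℝ => (|a| * T)⁻¹) atTop (nhds 0) :=
      (tendsto_id.const_mul_atTop (abs_pos.2 ha)).inv_tendsto_atTop
    refine squeeze_zero_norm' ?_ hg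
    filter_upwards [eventually_gt_atTop 0] with T hT
    have h1 : ‖Complex.exp (Complex.I * a * T)‖ = 1 := by
      simp [Complex.norm_exp]
    have h2 : ‖Complex.exp (-(Complex.I * b * Real.log T))‖ = 1 := by
      simp [Complex.norm_exp]
    rw [hv, hu]
    simp only
    rw [norm_mul, norm_div, norm_div, h1, h2,
      show ‖(Complex.I * a : ℂ)‖ = |a| by simp,
      show ‖((T:ℝ):ℂ)‖ = |T| by simp,
      abs_of_pos hT, one_div, one_div, ← mul_inv]
  -- limit of the tail integral
  have hwlim : Tendsto (fun T : ℝ => ∫ τ in t..T, w τ) atTop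
      (nhds (∫ τ in Ioi t, w τ)) :=
    intervalIntegral_tendsto_integral_Ioi t hwint tendsto_id
  refine ⟨-(v t * u t) - ∫ τ in Ioi t, w τ, ?_, ?_⟩
  · have h0 : Tendsto (fun T : ℝ => (v T * u T - v t * u t) - ∫ τ in t..T, w τ) atTop
        (nhds ((0 - v t * u t) - ∫ τ in Ioi t, w τ)) :=
      (hHT.sub tendsto_const_nhds).sub hwlim
    rw [zero_sub] at h0
    refine Tendsto.congr' ?_ h0
    filter_upwards [eventually_ge_atTop t] with T hT
    exact (key T hT).symm
  · -- norm bound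
    have hb1 : ‖v t * u t‖ = (|a| * t)⁻¹ := by
      have h1 : ‖Complex.exp (Complex.I * a * t)‖ = 1 := by
        simp [Complex.norm_exp]
      have h2 : ‖Complex.exp (-(Complex.I * b * Real.log t))‖ = 1 := by
        simp [Complex.norm_exp]
      rw [hv, hu]
      simp only
      rw [norm_mul, norm_div, norm_div, h1, h2,
        show ‖(Complex.I * a : ℂ)‖ = |a| by simp,
        show ‖((t:ℝ):ℂ)‖ = |t| by simp,
        abs_of_pos ht, one_div, one_div, ← mul_inv]
    have hb2 : ‖∫ τ in Ioi t, w τ‖ ≤ (1 + |b|) / |a| * t⁻¹ := by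
      have := norm_integral_le_of_norm_le hgint
        ((ae_restrict_iff' measurableSet_Ioi).2 (ae_of_all _ hwbound))
      refine this.trans ?_
      rw [integral_const_mul, integral_Ioi_rpow_of_lt (show (-2:ℝ) < -1 by norm_num) ht]
      have : -t ^ ((-2:ℝ) + 1) / (-2 + 1) = t⁻¹ := by
        norm_num
        rw [Real.rpow_neg_one]
      rw [this]
    calc ‖-(v t * u t) - ∫ τ in Ioi t, w τ‖
        ≤ ‖-(v t * u t)‖ + ‖∫ τ in Ioi t, w τ‖ := norm_sub_le _ _
      _ = (|a| * t)⁻¹ + ‖∫ τ in Ioi t, w τ‖ := by rw [norm_neg, hb1]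
      _ ≤ (|a| * t)⁻¹ + (1 + |b|) / |a| * t⁻¹ := by linarith [hb2]
      _ = (2 + |b|) / (|a| * t) := by
          field_simp
          ring
end

section
/- For every α ∈ ℂ, the function u_α(t,x) := α e^{i|α|² ln t} e^{i x²/(4t)}/√t satisfies the focusing cubic Schrödinger equation i ∂_t u + ∂_x² u + |u|² u = 0 pointwise on (0,∞) × ℝ. -/
noncomputable section

/-- The self-similar profile `u_α(t,x) = α e^{i|α|² ln t} e^{i x²/(4t)} / √t`. -/
def uAlpha (α : ℂ) (t x : ℝ) : ℂ :=
  α * Complex.exp (Complex.I * ((‖α‖ ^ 2 : ℝ) : ℂ) * (Real.log t : ℂ)) *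
    Complex.exp (Complex.I * (x : ℂ) ^ 2 / (4 * (t : ℂ))) / (Real.sqrt t : ℂ)

open Complex Real in
lemma uAlpha_hasDerivAt_t (α : ℂ) (x : ℝ) {t : ℝ} (ht : 0 < t) :
    HasDerivAt (fun s => uAlpha α s x)
      (uAlpha α t x * (Complex.I * ((‖α‖ ^ 2 : ℝ) : ℂ) / t
        - Complex.I * (x : ℂ) ^ 2 / (4 * (t:ℂ) ^ 2) - 1 / (2 * t))) t := by
  have htne : (t : ℂ) ≠ 0 := by exact_mod_cast ht.ne'
  have hst : Real.sqrt t ≠ 0 := (Real.sqrt_pos.mpr ht).ne'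
  have hstC : ((Real.sqrt t : ℝ) : ℂ) ≠ 0 := by exact_mod_cast hst
  have hlog : HasDerivAt (fun s : ℝ => (Real.log s : ℂ)) ((t⁻¹ : ℝ) : ℂ) t :=
    (Real.hasDerivAt_log ht.ne').ofReal_comp
  have he1 : HasDerivAt (fun s : ℝ => Complex.I * ((‖α‖ ^ 2 : ℝ) : ℂ) * (Real.log s : ℂ))
      (Complex.I * ((‖α‖ ^ 2 : ℝ) : ℂ) * ((t⁻¹ : ℝ) : ℂ)) t := hlog.const_mul _
  have hE1 := he1.cexp
  have hid : HasDerivAt (fun s : ℝ => ((s : ℝ) : ℂ)) 1 t := by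
    simpa using (hasDerivAt_id t).ofReal_comp
  have hinv := (hasDerivAt_inv htne).comp t hid
  have he2' := hinv.const_mul (Complex.I * (x : ℂ) ^ 2 / 4)
  have heq : (fun s : ℝ => Complex.I * (x : ℂ) ^ 2 / (4 * (s : ℂ)))
      = fun s : ℝ => Complex.I * (x : ℂ) ^ 2 / 4 * ((s : ℂ))⁻¹ := by
    funext s; rw [div_mul_eq_div_div_swap, div_eq_mul_inv]; ring
  have he2 := heq.symm ▸ he2'
  have hE2 := he2.cexp
  have hsq : HasDerivAt (fun s : ℝ => ((Real.sqrt s : ℝ) : ℂ))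
      (((1 / (2 * Real.sqrt t) : ℝ)) : ℂ) t := (Real.hasDerivAt_sqrt ht.ne').ofReal_comp
  have hnum := ((hE1.const_mul α).mul hE2)
  have h := hnum.div hsq hstC
  convert h using 1
  · rfl
  · rfl
  simp only [uAlpha, Pi.mul_apply]
  have hsq2 : ((Real.sqrt t : ℝ) : ℂ) ^ 2 = (t : ℂ) := by
    rw [← Complex.ofReal_pow, Real.sq_sqrt ht.le]
  push_cast
  rw [← hsq2]
  field_simp
  ring

lemma hasDerivAt_xfun (c T : ℂ) (hT : T ≠ 0) (y : ℝ) :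
    HasDerivAt (fun y : ℝ => c * Complex.exp (Complex.I * (y:ℂ)^2 / (4*T)))
      (c * Complex.exp (Complex.I * (y:ℂ)^2/(4*T)) * (Complex.I * (y:ℂ) / (2*T))) y := by
  have hid : HasDerivAt (fun s : ℝ => ((s : ℝ) : ℂ)) 1 y := by
    simpa using (hasDerivAt_id y).ofReal_comp
  have hy2 := (hasDerivAt_pow 2 ((y:ℝ):ℂ)).comp y hid
  have he' := hy2.const_mul (Complex.I / (4*T))
  have heq : (fun s : ℝ => Complex.I * (s:ℂ)^2 / (4*T))
      = fun s : ℝ => Complex.I / (4*T) * ((s:ℂ))^2 := by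
    funext s; ring
  have he := heq.symm ▸ he'
  have h := (he.cexp).const_mul c
  convert h using 1
  · rfl
  field_simp
  ring

lemma deriv_uAlpha_x (α : ℂ) {t : ℝ} (ht : 0 < t) :
    deriv (fun y => uAlpha α t y) = fun y => uAlpha α t y * (Complex.I * (y:ℂ) / (2*(t:ℂ))) := by
  have htne : (t : ℂ) ≠ 0 := by exact_mod_cast ht.ne'
  funext y
  have heq : (fun y : ℝ => uAlpha α t y)
      = fun y : ℝ => (α * Complex.exp (Complex.I * ((‖α‖ ^ 2 : ℝ) : ℂ) * (Real.log t : ℂ)) / (Real.sqrt t : ℂ))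
          * Complex.exp (Complex.I * (y:ℂ)^2 / (4*(t:ℂ))) := by
    funext y; simp only [uAlpha]; ring
  rw [heq]
  rw [(hasDerivAt_xfun _ _ htne y).deriv]
  simp only [uAlpha]; ring

lemma normsq_uAlpha (α : ℂ) {t : ℝ} (ht : 0 < t) (x : ℝ) :
    ((‖uAlpha α t x‖ ^ 2 : ℝ) : ℂ) = ((‖α‖ ^ 2 : ℝ) : ℂ) / (t : ℂ) := by
  have h1 : (Complex.I * ((‖α‖ ^ 2 : ℝ) : ℂ) * (Real.log t : ℂ))
      = (((‖α‖ ^ 2 * Real.log t : ℝ)) : ℂ) * Complex.I := by push_cast; ring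
  have h2 : (Complex.I * (x : ℂ) ^ 2 / (4 * (t : ℂ)))
      = (((x ^ 2 / (4 * t) : ℝ)) : ℂ) * Complex.I := by push_cast; ring
  have hre1 : (Complex.I * ((‖α‖ ^ 2 : ℝ) : ℂ) * (Real.log t : ℂ)).re = 0 := by
    rw [h1]
    simp only [Complex.mul_re, Complex.I_re, Complex.I_im, Complex.ofReal_re, Complex.ofReal_im]
    ring
  have hre2 : (Complex.I * (x : ℂ) ^ 2 / (4 * (t : ℂ))).re = 0 := by
    rw [h2]
    simp only [Complex.mul_re, Complex.I_re, Complex.I_im, Complex.ofReal_re, Complex.ofReal_im]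
    ring
  have E1 : ‖Complex.exp (Complex.I * ((‖α‖ ^ 2 : ℝ) : ℂ) * (Real.log t : ℂ))‖ = 1 := by
    rw [Complex.norm_exp, hre1, Real.exp_zero]
  have E2 : ‖Complex.exp (Complex.I * (x : ℂ) ^ 2 / (4 * (t : ℂ)))‖ = 1 := by
    rw [Complex.norm_exp, hre2, Real.exp_zero]
  have hnorm : ‖uAlpha α t x‖ = ‖α‖ / Real.sqrt t := by
    simp only [uAlpha, norm_div, norm_mul, E1, E2, mul_one, Complex.norm_real]
    rw [Real.norm_eq_abs, _root_.abs_of_nonneg (Real.sqrt_nonneg t)]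
  rw [hnorm]
  rw [div_pow, Real.sq_sqrt ht.le]
  push_cast
  ring

lemma uAlpha_hasDerivAt_x (α : ℂ) {t : ℝ} (ht : 0 < t) (y : ℝ) :
    HasDerivAt (fun y => uAlpha α t y) (uAlpha α t y * (Complex.I * (y:ℂ) / (2*(t:ℂ)))) y := by
  have htne : (t : ℂ) ≠ 0 := by exact_mod_cast ht.ne'
  have heq : (fun y : ℝ => uAlpha α t y)
      = fun y : ℝ => (α * Complex.exp (Complex.I * ((‖α‖ ^ 2 : ℝ) : ℂ) * (Real.log t : ℂ)) / (Real.sqrt t : ℂ))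
          * Complex.exp (Complex.I * (y:ℂ)^2 / (4*(t:ℂ))) := by
    funext y; simp only [uAlpha]; ring
  rw [heq]
  convert hasDerivAt_xfun _ _ htne y using 1
  simp only [uAlpha]; ring

/-- `u_α` satisfies the focusing cubic NLS
`i ∂_t u + ∂_x² u + |u|² u = 0` pointwise on `(0,∞) × ℝ`. -/
theorem uAlpha_solves_NLS (α : ℂ) (t : ℝ) (ht : 0 < t) (x : ℝ) :
    Complex.I * deriv (fun s => uAlpha α s x) t
      + iteratedDeriv 2 (fun y => uAlpha α t y) x
      + ((‖uAlpha α t x‖ ^ 2 : ℝ) : ℂ) * uAlpha α t x = 0 := by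
  have htne : (t : ℂ) ≠ 0 := by exact_mod_cast ht.ne'
  rw [(uAlpha_hasDerivAt_t α x ht).deriv]
  rw [iteratedDeriv_succ, iteratedDeriv_one, deriv_uAlpha_x α ht]
  have hlin : HasDerivAt (fun y : ℝ => Complex.I * (y:ℂ) / (2*(t:ℂ))) (Complex.I / (2*(t:ℂ))) x := by
    have hid : HasDerivAt (fun s : ℝ => ((s : ℝ) : ℂ)) 1 x := by
      simpa using (hasDerivAt_id x).ofReal_comp
    have h := hid.const_mul (Complex.I / (2*(t:ℂ)))
    have heq : (fun y : ℝ => Complex.I * (y:ℂ) / (2*(t:ℂ)))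
        = fun y : ℝ => Complex.I / (2*(t:ℂ)) * ((y:ℝ):ℂ) := by funext y; ring
    rw [heq]
    simpa using h
  have hprod := (uAlpha_hasDerivAt_x α ht x).fun_mul hlin
  rw [hprod.deriv]
  rw [normsq_uAlpha α ht x]
  have hS : ∀ A : ℂ, Complex.I * (Complex.I * A / t
        - Complex.I * (x : ℂ) ^ 2 / (4 * (t:ℂ) ^ 2) - 1 / (2 * t))
      + ((Complex.I * (x:ℂ) / (2*(t:ℂ))) * (Complex.I * (x:ℂ) / (2*(t:ℂ)))
          + Complex.I / (2*(t:ℂ)))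
      + A / (t:ℂ) = 0 := by
    intro A
    have hI : (Complex.I : ℂ) ^ 2 = -1 := Complex.I_sq
    linear_combination (A / (t:ℂ)) * hI
  linear_combination (uAlpha α t x) * hS (((‖α‖ ^ 2 : ℝ) : ℂ))
end
end

section
/- Let α ∈ ℂ with α ≠ 0 and set u_α(t,x) := α e^{i|α|² ln t} e^{i x²/(4t)}/√t. Then there is no tempered distribution u₀ ∈ 𝒮'(ℝ) such that ∫_ℝ u_α(t,x) φ(x) dx → u₀(φ) as t → 0⁺ for every Schwartz function φ ∈ 𝒮(ℝ). In other words, u_α(t,·) has no limit in 𝒮'(ℝ) as t → 0⁺. -/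
noncomputable section

section Aux
open Complex Polynomial

def gfun (x : ℝ) : ℂ := Complex.exp (-(x:ℂ)^2)

lemma ofReal_hasDerivAt (x : ℝ) : HasDerivAt (fun x : ℝ => (x:ℂ)) 1 x :=
  Complex.ofRealCLM.hasDerivAt

lemma gfun_smooth : ContDiff ℝ ⊤ gfun := by
  apply Complex.contDiff_exp.comp
  exact (Complex.ofRealCLM.contDiff.pow 2).neg

lemma gfun_deriv (x : ℝ) : HasDerivAt gfun ((-2*x) * gfun x) x := by
  have h1 : HasDerivAt (fun x : ℝ => -(x:ℂ)^2) (-(2*x)) x := by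
    have h := ((ofReal_hasDerivAt x).mul (ofReal_hasDerivAt x)).neg
    have e : (fun x : ℝ => -(x:ℂ)^2) = fun x : ℝ => -((x:ℂ) * (x:ℂ)) := by
      funext y; ring
    rw [e]
    exact h.congr_deriv (by ring)
  have := h1.cexp
  exact this.congr_deriv (by simp only [gfun]; ring)

def gpoly : ℕ → Polynomial ℝ
  | 0 => 1
  | n+1 => derivative (gpoly n) - 2 * X * gpoly n

lemma gfun_iteratedDeriv (n : ℕ) :
    iteratedDeriv n gfun = fun x : ℝ => (((gpoly n).eval x : ℝ) : ℂ) * gfun x := by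
  induction n with
  | zero => simp [gpoly]
  | succ n ih =>
    rw [iteratedDeriv_succ, ih]
    funext x
    have h1 : HasDerivAt (fun x : ℝ => (((gpoly n).eval x : ℝ) : ℂ))
        (((derivative (gpoly n)).eval x : ℝ) : ℂ) x :=
      ((gpoly n).hasDerivAt x).ofReal_comp
    have h2 := h1.mul (gfun_deriv x)
    rw [show (fun x : ℝ => (((gpoly n).eval x : ℝ) : ℂ) * gfun x)
      = ((fun x : ℝ => (((gpoly n).eval x : ℝ) : ℂ)) * gfun) from rfl, h2.deriv]
    simp [gpoly]
    ring

lemma pow_mul_exp_neg_sq_le (i : ℕ) (x : ℝ) :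
    |x| ^ i * Real.exp (-x ^ 2) ≤ Nat.factorial i := by
  rcases le_or_gt (|x|) 1 with h | h
  · have h1 : |x| ^ i ≤ 1 := pow_le_one₀ (abs_nonneg x) h
    have h2 : Real.exp (-x ^ 2) ≤ 1 := Real.exp_le_one_iff.mpr (neg_nonpos.mpr (by positivity))
    calc |x| ^ i * Real.exp (-x ^ 2) ≤ 1 * 1 :=
          mul_le_mul h1 h2 (Real.exp_pos _).le one_pos.le
      _ ≤ Nat.factorial i := by exact_mod_cast Nat.one_le_iff_ne_zero.mpr (Nat.factorial_ne_zero i)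
  · have hx2 : (x ^ 2) ^ i / Nat.factorial i ≤ Real.exp (x ^ 2) := by
      have := Real.sum_le_exp_of_nonneg (x := x ^ 2) (by positivity) (i + 1)
      refine le_trans ?_ this
      exact Finset.single_le_sum (f := fun j => (x ^ 2) ^ j / (Nat.factorial j : ℝ))
        (fun j _ => by positivity) (Finset.self_mem_range_succ i)
    have h1 : |x| ^ i ≤ (x ^ 2) ^ i := by
      rw [← _root_.sq_abs, ← pow_mul]
      exact pow_le_pow_right₀ h.le (Nat.le_mul_of_pos_left i two_pos)
    have h2 : (x ^ 2) ^ i ≤ Nat.factorial i * Real.exp (x ^ 2) := by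
      rw [div_le_iff₀ (by positivity)] at hx2
      linarith [hx2]
    calc |x| ^ i * Real.exp (-x ^ 2) ≤ (Nat.factorial i * Real.exp (x ^ 2)) * Real.exp (-x ^ 2) :=
          mul_le_mul_of_nonneg_right (h1.trans h2) (Real.exp_pos _).le
      _ = Nat.factorial i := by rw [mul_assoc, ← Real.exp_add]; simp

lemma poly_gauss_bound (q : Polynomial ℝ) (k : ℕ) :
    ∃ C, ∀ x : ℝ, |x| ^ k * (|q.eval x| * Real.exp (-x ^ 2)) ≤ C := by
  refine ⟨∑ i ∈ Finset.range (q.natDegree + 1), |q.coeff i| * Nat.factorial (k + i), fun x => ?_⟩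
  have hE : (0:ℝ) < Real.exp (-x ^ 2) := Real.exp_pos _
  have hq : |q.eval x| ≤ ∑ i ∈ Finset.range (q.natDegree + 1), |q.coeff i| * |x| ^ i := by
    conv_lhs => rw [Polynomial.eval_eq_sum_range]
    refine (Finset.abs_sum_le_sum_abs _ _).trans (le_of_eq ?_)
    refine Finset.sum_congr rfl fun i _ => ?_
    rw [abs_mul, pow_abs]
  calc |x| ^ k * (|q.eval x| * Real.exp (-x ^ 2))
      ≤ |x| ^ k * ((∑ i ∈ Finset.range (q.natDegree + 1), |q.coeff i| * |x| ^ i)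
          * Real.exp (-x ^ 2)) := by
        refine mul_le_mul_of_nonneg_left ?_ (by positivity)
        exact mul_le_mul_of_nonneg_right hq hE.le
    _ = ∑ i ∈ Finset.range (q.natDegree + 1),
          |q.coeff i| * (|x| ^ (k + i) * Real.exp (-x ^ 2)) := by
        rw [Finset.sum_mul, Finset.mul_sum]
        refine Finset.sum_congr rfl fun i _ => ?_
        rw [pow_add]; ring
    _ ≤ ∑ i ∈ Finset.range (q.natDegree + 1), |q.coeff i| * Nat.factorial (k + i) := by
        refine Finset.sum_le_sum fun i _ => ?_
        exact mul_le_mul_of_nonneg_left (pow_mul_exp_neg_sq_le (k + i) x) (abs_nonneg _)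

lemma gfun_norm (x : ℝ) : ‖gfun x‖ = Real.exp (-x ^ 2) := by
  rw [gfun, Complex.norm_exp]
  norm_cast

def gaussianSchwartz : SchwartzMap ℝ ℂ where
  toFun := gfun
  smooth' := gfun_smooth.of_le le_top
  decay' := by
    intro k n
    obtain ⟨C, hC⟩ := poly_gauss_bound (gpoly n) k
    refine ⟨C, fun x => ?_⟩
    rw [norm_iteratedFDeriv_eq_norm_iteratedDeriv, gfun_iteratedDeriv]
    simp only [norm_mul, Complex.norm_real, Real.norm_eq_abs, gfun_norm]
    exact hC x

lemma gaussianSchwartz_apply (x : ℝ) : gaussianSchwartz x = Complex.exp (-(x:ℂ)^2) := rfl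

lemma ofReal_mul_cpow_half {r : ℝ} (hr : 0 < r) {z : ℂ} (hz : z ≠ 0) :
    ((r:ℂ) * z) ^ (1/2 : ℂ) = (Real.sqrt r : ℂ) * z ^ (1/2 : ℂ) := by
  have hr' : (r:ℂ) ≠ 0 := Complex.ofReal_ne_zero.mpr hr.ne'
  rw [Complex.cpow_def_of_ne_zero (mul_ne_zero hr' hz),
    Complex.log_ofReal_mul hr hz, add_mul, Complex.exp_add,
    ← Complex.cpow_def_of_ne_zero hz]
  congr 1
  rw [Real.sqrt_eq_rpow, Real.rpow_def_of_pos hr]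
  rw [show ((Real.log r : ℝ):ℂ) * (1/2 : ℂ) = ((Real.log r * (1/2) : ℝ) : ℂ) by push_cast; ring]
  exact (Complex.ofReal_exp _).symm

lemma tsub_I4_ne (t : ℝ) : (t:ℂ) - Complex.I/4 ≠ 0 := by
  intro h
  have := congrArg Complex.im h
  simp at this

lemma Gval_ne (t : ℝ) : (Real.pi : ℂ) / ((t:ℂ) - Complex.I/4) ≠ 0 :=
  div_ne_zero (Complex.ofReal_ne_zero.mpr Real.pi_ne_zero) (tsub_I4_ne t)

lemma integral_uAlpha_gauss (α : ℂ) {t : ℝ} (ht : 0 < t) :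
    ∫ x : ℝ, uAlpha α t x * gaussianSchwartz x
      = α * Complex.exp (Complex.I * ((‖α‖ ^ 2 : ℝ) : ℂ) * (Real.log t : ℂ)) *
        ((Real.pi : ℂ) / ((t:ℂ) - Complex.I/4)) ^ (1/2 : ℂ) := by
  have htC : (t:ℂ) ≠ 0 := Complex.ofReal_ne_zero.mpr ht.ne'
  set b : ℂ := 1 - Complex.I / (4 * t) with hb_def
  have hb : 0 < b.re := by
    have h4 : Complex.I / (4 * (t:ℂ)) = Complex.I / ((4*t:ℝ):ℂ) := by push_cast; ring_nf
    have : b.re = 1 - (Complex.I / ((4*t:ℝ):ℂ)).re := by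
      rw [hb_def, h4, Complex.sub_re, Complex.one_re]
    rw [this, Complex.div_ofReal_re]
    simp
  have hbne : b ≠ 0 := fun h => by rw [h] at hb; simp at hb
  have hst : (Real.sqrt t : ℂ) ≠ 0 :=
    Complex.ofReal_ne_zero.mpr (Real.sqrt_pos.mpr ht).ne'
  set P : ℂ := Complex.exp (Complex.I * ((‖α‖ ^ 2 : ℝ) : ℂ) * (Real.log t : ℂ)) with hP
  have key : ∀ x : ℝ, uAlpha α t x * gaussianSchwartz x
      = (α * P / (Real.sqrt t : ℂ)) * Complex.exp (-b * (x:ℂ)^2) := by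
    intro x
    rw [gaussianSchwartz_apply, uAlpha]
    have hexp : Complex.exp (Complex.I * (x:ℂ)^2 / (4*(t:ℂ))) * Complex.exp (-(x:ℂ)^2)
        = Complex.exp (-b * (x:ℂ)^2) := by
      rw [← Complex.exp_add]
      congr 1
      rw [hb_def]
      field_simp
      ring
    rw [← hP, div_mul_eq_mul_div, mul_assoc (α * P), hexp, mul_div_right_comm]
  rw [MeasureTheory.integral_congr_ae (Filter.Eventually.of_forall key),
    MeasureTheory.integral_const_mul, integral_gaussian_complex hb]
  have hpb : (Real.pi : ℂ) / b = (t:ℂ) * ((Real.pi : ℂ) / ((t:ℂ) - Complex.I/4)) := by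
    rw [mul_div_assoc', div_eq_div_iff hbne (tsub_I4_ne t), hb_def]
    field_simp
  rw [hpb, ofReal_mul_cpow_half ht (Gval_ne t)]
  rw [div_mul_eq_mul_div, mul_comm ((Real.sqrt t : ℂ)), mul_assoc,
    mul_div_assoc, mul_div_assoc, mul_div_assoc, div_self hst, mul_one, ← mul_assoc]

lemma tendsto_sqrtG :
    Filter.Tendsto (fun t : ℝ => ((Real.pi : ℂ) / ((t:ℂ) - Complex.I/4)) ^ (1/2 : ℂ))
      (nhdsWithin 0 (Set.Ioi 0)) (nhds ((4*(Real.pi:ℂ)*Complex.I) ^ (1/2 : ℂ))) := by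
  have h0ne : (0:ℂ) - Complex.I/4 ≠ 0 := by simpa using tsub_I4_ne 0
  have h1 : Filter.Tendsto (fun t : ℝ => (t:ℂ) - Complex.I/4) (nhds 0)
      (nhds ((0:ℂ) - Complex.I/4)) :=
    ((Complex.continuous_ofReal.tendsto 0).sub tendsto_const_nhds)
  have h2 : Filter.Tendsto (fun t : ℝ => (Real.pi : ℂ) / ((t:ℂ) - Complex.I/4)) (nhds 0)
      (nhds ((Real.pi : ℂ) / ((0:ℂ) - Complex.I/4))) :=
    tendsto_const_nhds.div h1 h0ne
  have hval : (Real.pi : ℂ) / ((0:ℂ) - Complex.I/4) = 4*(Real.pi:ℂ)*Complex.I := by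
    rw [div_eq_iff h0ne]
    ring_nf
    rw [Complex.I_sq]
    ring
  have hcont : ContinuousAt (fun z : ℂ => z ^ (1/2 : ℂ)) (4*(Real.pi:ℂ)*Complex.I) := by
    apply continuousAt_cpow_const
    rw [Complex.mem_slitPlane_iff]
    right
    simp [Real.pi_ne_zero]
  rw [hval] at h2
  exact hcont.tendsto.comp (h2.mono_left nhdsWithin_le_nhds)


end Aux

/-- For `α ≠ 0` there is no tempered distribution `u₀ ∈ 𝒮'(ℝ)` such that
`∫ u_α(t,x) φ(x) dx → u₀(φ)` as `t → 0⁺` for every Schwartz function `φ`: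
`u_α(t,·)` has no limit in `𝒮'(ℝ)` as `t → 0⁺`. -/
theorem uAlpha_no_tempered_limit (α : ℂ) (hα : α ≠ 0) :
    ¬ ∃ u₀ : SchwartzMap ℝ ℂ →L[ℂ] ℂ, ∀ φ : SchwartzMap ℝ ℂ,
      Filter.Tendsto (fun t : ℝ => ∫ x : ℝ, uAlpha α t x * φ x)
        (nhdsWithin 0 (Set.Ioi 0)) (nhds (u₀ φ)) := by
  rintro ⟨u₀, hu⟩
  have hL := hu gaussianSchwartz
  set L := u₀ gaussianSchwartz with hLdef
  set c : ℂ := (4*(Real.pi:ℂ)*Complex.I) ^ (1/2 : ℂ) with hc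
  have hcne : c ≠ 0 := by
    rw [hc]
    intro h
    rw [Complex.cpow_eq_zero_iff] at h
    have := h.1
    simp [Real.pi_ne_zero, Complex.I_ne_zero] at this
  have hα2 : (‖α‖^2 : ℝ) ≠ 0 := pow_ne_zero 2 (norm_ne_zero_iff.mpr hα)
  have hα2C : ((‖α‖^2 : ℝ) : ℂ) ≠ 0 := Complex.ofReal_ne_zero.mpr hα2
  have hα2pos : (0:ℝ) < ‖α‖^2 := lt_of_le_of_ne (by positivity) (Ne.symm hα2)
  -- the sequences
  set seq : ℝ → ℕ → ℝ := fun θ n =>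
    Real.exp ((n:ℝ) * (-(2*Real.pi)/‖α‖^2) + (-θ/‖α‖^2)) with hseq_def
  have hseq_pos : ∀ θ n, 0 < seq θ n := fun θ n => Real.exp_pos _
  have hseq_tendsto : ∀ θ : ℝ, Filter.Tendsto (seq θ) Filter.atTop
      (nhdsWithin 0 (Set.Ioi 0)) := by
    intro θ
    rw [tendsto_nhdsWithin_iff]
    constructor
    · have hneg : -(2*Real.pi)/‖α‖^2 < 0 := by
        have : (0:ℝ) < 2*Real.pi := by positivity
        exact div_neg_of_neg_of_pos (by linarith) hα2pos
      have h1 : Filter.Tendsto (fun n : ℕ => (n:ℝ) * (-(2*Real.pi)/‖α‖^2))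
          Filter.atTop Filter.atBot :=
        tendsto_natCast_atTop_atTop.atTop_mul_const_of_neg hneg
      have h2 : Filter.Tendsto (fun n : ℕ => (n:ℝ) * (-(2*Real.pi)/‖α‖^2) + (-θ/‖α‖^2))
          Filter.atTop Filter.atBot :=
        Filter.tendsto_atBot_add_const_right _ _ h1
      exact Real.tendsto_exp_atBot.comp h2
    · exact Filter.Eventually.of_forall fun n => hseq_pos θ n
  -- the phase along the sequences
  have hphase : ∀ θ : ℝ, ∀ n : ℕ,
      Complex.I * ((‖α‖^2 : ℝ):ℂ) * ((Real.log (seq θ n) : ℝ) : ℂ)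
        = -((n:ℂ) * (2*(Real.pi:ℂ)*Complex.I)) - (θ:ℂ)*Complex.I := by
    intro θ n
    have hr : (‖α‖^2:ℝ) * ((n:ℝ) * (-(2*Real.pi)/‖α‖^2) + (-θ/‖α‖^2))
        = -(2*Real.pi*n) - θ := by
      field_simp
      ring
    rw [hseq_def]
    simp only [Real.log_exp]
    rw [mul_assoc, ← Complex.ofReal_mul, hr]
    push_cast
    ring
  -- the integral along the sequences
  have hint : ∀ θ : ℝ, ∀ n : ℕ,
      (∫ x : ℝ, uAlpha α (seq θ n) x * gaussianSchwartz x)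
        = α * Complex.exp (-((n:ℂ) * (2*(Real.pi:ℂ)*Complex.I)) - (θ:ℂ)*Complex.I) *
          ((Real.pi:ℂ) / (((seq θ n : ℝ):ℂ) - Complex.I/4)) ^ (1/2:ℂ) := by
    intro θ n
    rw [integral_uAlpha_gauss α (hseq_pos θ n), hphase θ n]
  have hexp0 : ∀ n : ℕ,
      Complex.exp (-((n:ℂ) * (2*(Real.pi:ℂ)*Complex.I)) - ((0:ℝ):ℂ)*Complex.I) = 1 := by
    intro n
    have h := Complex.exp_int_mul_two_pi_mul_I (-(n:ℤ))
    rw [← h]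
    congr 1
    push_cast
    ring
  have hexppi : ∀ n : ℕ,
      Complex.exp (-((n:ℂ) * (2*(Real.pi:ℂ)*Complex.I)) - ((Real.pi:ℝ):ℂ)*Complex.I) = -1 := by
    intro n
    have h1 : Complex.exp (-((n:ℂ) * (2*(Real.pi:ℂ)*Complex.I))) = 1 := by
      have h := Complex.exp_int_mul_two_pi_mul_I (-(n:ℤ))
      rw [← h]
      congr 1
      push_cast
      ring
    rw [sub_eq_add_neg, Complex.exp_add, h1, one_mul, Complex.exp_neg,
      Complex.exp_pi_mul_I]
    norm_num
  -- limits along the two sequences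
  have h0lim : Filter.Tendsto
      (fun n : ℕ => α * ((Real.pi:ℂ) / (((seq 0 n : ℝ):ℂ) - Complex.I/4)) ^ (1/2:ℂ))
      Filter.atTop (nhds (α * c)) :=
    (tendsto_sqrtG.comp (hseq_tendsto 0)).const_mul α
  have h0lim' : Filter.Tendsto
      (fun n : ℕ => α * ((Real.pi:ℂ) / (((seq 0 n : ℝ):ℂ) - Complex.I/4)) ^ (1/2:ℂ))
      Filter.atTop (nhds L) := by
    refine (hL.comp (hseq_tendsto 0)).congr fun n => ?_
    show (∫ x : ℝ, uAlpha α (seq 0 n) x * gaussianSchwartz x) = _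
    rw [hint 0 n, hexp0 n, mul_one]
  have hL0 : L = α * c := tendsto_nhds_unique h0lim' h0lim
  have h1lim : Filter.Tendsto
      (fun n : ℕ => α * -1 * ((Real.pi:ℂ) / (((seq Real.pi n : ℝ):ℂ) - Complex.I/4)) ^ (1/2:ℂ))
      Filter.atTop (nhds (α * -1 * c)) :=
    (tendsto_sqrtG.comp (hseq_tendsto Real.pi)).const_mul (α * -1)
  have h1lim' : Filter.Tendsto
      (fun n : ℕ => α * -1 * ((Real.pi:ℂ) / (((seq Real.pi n : ℝ):ℂ) - Complex.I/4)) ^ (1/2:ℂ))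
      Filter.atTop (nhds L) := by
    refine (hL.comp (hseq_tendsto Real.pi)).congr fun n => ?_
    show (∫ x : ℝ, uAlpha α (seq Real.pi n) x * gaussianSchwartz x) = _
    rw [hint Real.pi n, hexppi n]
  have hL1 : L = α * -1 * c := tendsto_nhds_unique h1lim' h1lim
  have he : α * c = α * -1 * c := hL0.symm.trans hL1
  exact (mul_ne_zero hα hcne) (by linear_combination (1/2 : ℂ) * he)
end
end
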